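/- Define ε(N,k,β) = 1 − (β / (N · C(N,k)))^{1/(N−k)} for 1 ≤ k < N and β ∈ (0,1), and ε(N,N,β) = 1. Then ε(N,k,β) is monotonically increasing in k: for all 1 ≤ k < N, ε(N,k,β) ≤ ε(N,k+1,β). -/

import Mathlib

open Finset in
lemma pow_le_pow_mul_choose (n j : ℕ) (hj : j ≤ n) : n ^ j ≤ j ^ j * n.choose j := by
  have hfac : (0 : ℕ) < Nat.factorial j := Nat.factorial_pos j
  have hmain : n ^ j * Nat.factorial j ≤ j ^ j * n.descFactorial j := by
    have h1 : n ^ j * Nat.factorial j = ∏ i ∈ range j, n * (j - i) := by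
      rw [prod_mul_distrib, prod_const, card_range]
      congr 1
      rw [← Finset.prod_range_add_one_eq_factorial j,
        ← prod_range_reflect (fun i => i + 1) j]
      apply prod_congr rfl
      intro i hi
      simp only [mem_range] at hi
      omega
    have h2 : j ^ j * n.descFactorial j = ∏ i ∈ range j, j * (n - i) := by
      rw [prod_mul_distrib, prod_const, card_range, Nat.descFactorial_eq_prod_range]
    rw [h1, h2]
    apply Finset.prod_le_prod'
    intro i hi
    simp only [mem_range] at hi
    have h3 : n * (j - i) = n * j - n * i := by rw [Nat.mul_sub]
    have h4 : j * (n - i) = j * n - j * i := by rw [Nat.mul_sub]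
    have h5 : j * i ≤ n * i := Nat.mul_le_mul_right i hj
    have h6 : n * i ≤ n * j := Nat.mul_le_mul_left n (le_of_lt hi)
    have h7 : j * n = n * j := Nat.mul_comm j n
    omega
  rw [Nat.descFactorial_eq_factorial_mul_choose] at hmain
  have h7 : n ^ j * Nat.factorial j ≤ j ^ j * n.choose j * Nat.factorial j := by
    calc n ^ j * Nat.factorial j ≤ j ^ j * (Nat.factorial j * n.choose j) := hmain
    _ = j ^ j * n.choose j * Nat.factorial j := by ring
  exact Nat.le_of_mul_le_mul_right h7 hfac

lemma key_nat (N k : ℕ) (hkN : k + 1 < N) :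
    (N * N.choose k) ^ (N - k - 1) ≤ (N * N.choose (k + 1)) ^ (N - k) := by
  set m := N - k with hm
  set j := N - (k + 1) with hj
  have hmj : m = j + 1 := by omega
  have hsymm : N.choose (k + 1) = N.choose j := by
    rw [hj, Nat.choose_symm (by omega)]
  have hb : N ^ j ≤ j ^ j * N.choose (k + 1) := by
    rw [hsymm]; exact pow_le_pow_mul_choose N j (by omega)
  have hid : N.choose k * m = N.choose (k + 1) * (k + 1) := by
    rw [Nat.choose_succ_right_eq, hm]
  have hkey : (k + 1) ^ j ≤ m ^ j * (N * N.choose (k + 1)) := by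
    calc (k + 1) ^ j ≤ N ^ j := Nat.pow_le_pow_left (by omega) j
      _ ≤ j ^ j * N.choose (k + 1) := hb
      _ ≤ m ^ j * N.choose (k + 1) :=
          Nat.mul_le_mul_right _ (Nat.pow_le_pow_left (by omega) j)
      _ ≤ m ^ j * (N * N.choose (k + 1)) := by
          rw [← mul_assoc]
          exact Nat.mul_le_mul_right _ (Nat.le_mul_of_pos_right _ (by omega))
  have hmpos : 0 < m ^ j := pow_pos (by omega) j
  have hNmk1 : N - k - 1 = j := by omega
  rw [hNmk1]
  have hcalc : m ^ j * (N * N.choose k) ^ j ≤ m ^ j * (N * N.choose (k + 1)) ^ m := by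
    calc m ^ j * (N * N.choose k) ^ j = (N * (N.choose k * m)) ^ j := by
          rw [mul_pow, mul_pow]; ring
      _ = ((k + 1) * (N * N.choose (k + 1))) ^ j := by rw [hid]; ring_nf
      _ = (k + 1) ^ j * (N * N.choose (k + 1)) ^ j := mul_pow _ _ _
      _ ≤ (m ^ j * (N * N.choose (k + 1))) * (N * N.choose (k + 1)) ^ j :=
          Nat.mul_le_mul_right _ hkey
      _ = m ^ j * (N * N.choose (k + 1)) ^ m := by rw [hmj, pow_succ]; ring
  exact Nat.le_of_mul_le_mul_left hcalc hmpos

noncomputable def eps (N k : ℕ) (β : ℝ) : ℝ :=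
  if k = N then 1
  else 1 - (β / (N * (N.choose k))) ^ ((1 : ℝ) / ((N : ℝ) - (k : ℝ)))

/-- ε(N,k,β) is monotonically increasing in k. -/
theorem eps_mono_k (N k : ℕ) (hk1 : 1 ≤ k) (hkN : k < N)
    (β : ℝ) (hβ0 : 0 < β) (hβ1 : β < 1) :
    eps N k β ≤ eps N (k + 1) β := by
  have hkne : k ≠ N := Nat.ne_of_lt hkN
  have hNpos : (0 : ℝ) < N := by exact_mod_cast (by omega : 0 < N)
  have hD1pos : (0 : ℝ) < N * N.choose k :=
    mul_pos hNpos (by exact_mod_cast Nat.choose_pos hkN.le)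
  have hapos : (0 : ℝ) < β / (N * N.choose k) := div_pos hβ0 hD1pos
  by_cases hEq : k + 1 = N
  · rw [eps, eps, if_neg hkne, if_pos hEq]
    have := Real.rpow_nonneg hapos.le ((1 : ℝ) / ((N : ℝ) - (k : ℝ)))
    linarith
  · have hk1N : k + 1 < N := lt_of_le_of_ne hkN hEq
    rw [eps, eps, if_neg hkne, if_neg hEq]
    have hD2pos : (0 : ℝ) < N * N.choose (k + 1) :=
      mul_pos hNpos (by exact_mod_cast Nat.choose_pos hk1N.le)
    have hbpos : (0 : ℝ) < β / (N * N.choose (k + 1)) := div_pos hβ0 hD2pos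
    set a : ℝ := β / (N * N.choose k) with ha
    set b : ℝ := β / (N * N.choose (k + 1)) with hb
    set m : ℕ := N - k with hm
    have hm2 : 2 ≤ m := by omega
    have hcast1 : (N : ℝ) - (k : ℝ) = ((m : ℕ) : ℝ) := by
      rw [hm, Nat.cast_sub hkN.le]
    have hcast2 : (N : ℝ) - ((k + 1 : ℕ) : ℝ) = ((m - 1 : ℕ) : ℝ) := by
      have h9 : m - 1 = N - (k + 1) := by omega
      rw [h9, Nat.cast_sub hk1N.le]
    rw [hcast1, hcast2]
    -- key real inequality : b ^ m ≤ a ^ (m - 1) (monoid pow)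
    have hnat := key_nat N k hk1N
    have hnatR : ((N : ℝ) * N.choose k) ^ (m - 1) ≤ ((N : ℝ) * N.choose (k + 1)) ^ m := by
      have := (Nat.cast_le (α := ℝ)).2 hnat
      push_cast at this
      convert this using 2 <;> omega
    have hpow : b ^ m ≤ a ^ (m - 1) := by
      rw [ha, hb, div_pow, div_pow,
        div_le_div_iff₀ (by positivity) (by positivity)]
      have hβm : β ^ m = β ^ (m - 1) * β := by
        rw [← pow_succ]; congr 1; omega
      calc β ^ m * ((N : ℝ) * N.choose k) ^ (m - 1)
          = β ^ (m - 1) * (β * ((N : ℝ) * N.choose k) ^ (m - 1)) := by rw [hβm]; ring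
        _ ≤ β ^ (m - 1) * ((N : ℝ) * N.choose k) ^ (m - 1) := by
            apply mul_le_mul_of_nonneg_left _ (by positivity)
            nlinarith [pow_pos hD1pos (m - 1)]
        _ ≤ β ^ (m - 1) * ((N : ℝ) * N.choose (k + 1)) ^ m :=
            mul_le_mul_of_nonneg_left hnatR (by positivity)
    -- transfer to rpow with exponents 1/(m-1) and 1/m
    set M : ℕ := m * (m - 1) with hM
    have hm1pos : (0 : ℝ) < ((m - 1 : ℕ) : ℝ) := by exact_mod_cast (by omega : 0 < m - 1)
    have hmposR : (0 : ℝ) < ((m : ℕ) : ℝ) := by exact_mod_cast (by omega : 0 < m)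
    have hMcast : ((M : ℕ) : ℝ) = ((m : ℕ) : ℝ) * ((m - 1 : ℕ) : ℝ) := by
      rw [hM, Nat.cast_mul]
    have hxM : (b ^ ((1 : ℝ) / ((m - 1 : ℕ) : ℝ))) ^ M = b ^ m := by
      rw [← Real.rpow_natCast (b ^ ((1 : ℝ) / ((m - 1 : ℕ) : ℝ))) M,
        ← Real.rpow_mul hbpos.le]
      rw [show (1 : ℝ) / ((m - 1 : ℕ) : ℝ) * ((M : ℕ) : ℝ) = ((m : ℕ) : ℝ) by
        rw [hMcast, one_div, mul_comm ((m : ℕ) : ℝ) _, ← mul_assoc,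
          inv_mul_cancel₀ hm1pos.ne', one_mul]]
      exact Real.rpow_natCast b m
    have hyM : (a ^ ((1 : ℝ) / ((m : ℕ) : ℝ))) ^ M = a ^ (m - 1) := by
      rw [← Real.rpow_natCast (a ^ ((1 : ℝ) / ((m : ℕ) : ℝ))) M,
        ← Real.rpow_mul hapos.le]
      rw [show (1 : ℝ) / ((m : ℕ) : ℝ) * ((M : ℕ) : ℝ) = ((m - 1 : ℕ) : ℝ) by
        rw [hMcast, one_div, ← mul_assoc, inv_mul_cancel₀ hmposR.ne', one_mul]]
      exact Real.rpow_natCast a (m - 1)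
    have hxy : b ^ ((1 : ℝ) / ((m - 1 : ℕ) : ℝ)) ≤ a ^ ((1 : ℝ) / ((m : ℕ) : ℝ)) := by
      have hMne : M ≠ 0 := by
        rw [hM]; exact Nat.mul_ne_zero (by omega) (by omega)
      have h10 : (b ^ ((1 : ℝ) / ((m - 1 : ℕ) : ℝ))) ^ M
          ≤ (a ^ ((1 : ℝ) / ((m : ℕ) : ℝ))) ^ M := by
        rw [hxM, hyM]; exact hpow
      exact le_of_pow_le_pow_left₀ hMne (Real.rpow_nonneg hapos.le _) h10
    linarith
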